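/- Let P be a finite set of points in general position in the plane containing b blue points and b - 3t red points, where t is a nonnegative integer with 3t ≤ b. Then there exist t triangles, each with its three vertices at distinct blue points of P (no blue point used by more than one triangle), such that no triangle contains a red point of P in its interior or on its boundary. -/

import Mathlib

abbrev Pt := ℝ × ℝ

/-- A finite planar point set is in general position if no three of its points are collinear. -/
def GenPos (P : Finset Pt) : Prop :=
  ∀ p ∈ P, ∀ q ∈ P, ∀ r ∈ P, p ≠ q → p ≠ r → q ≠ r → ¬ Collinear ℝ ({p, q, r} : Set Pt)

/-- Cross product of `a - p` and `b - p`. -/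
def cross (p a b : Pt) : ℝ := (a.1 - p.1) * (b.2 - p.2) - (a.2 - p.2) * (b.1 - p.1)

lemma exists_inj (P : Finset Pt) :
    ∃ c : ℝ, ∀ p ∈ P, ∀ q ∈ P, p.1 + c * p.2 = q.1 + c * q.2 → p = q := by
  obtain ⟨c, hc⟩ := Infinite.exists_notMem_finset
    ((P ×ˢ P).image (fun pq => (pq.2.1 - pq.1.1) / (pq.1.2 - pq.2.2)))
  refine ⟨c, fun p hp q hq h => ?_⟩
  by_contra hne
  by_cases h2 : p.2 = q.2
  · rw [h2] at h
    exact hne (Prod.ext (by linarith) h2)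
  · apply hc
    refine Finset.mem_image.2 ⟨(q, p), Finset.mem_product.2 ⟨hq, hp⟩, ?_⟩
    show (p.1 - q.1) / (q.2 - p.2) = c
    rw [div_eq_iff (sub_ne_zero.2 (Ne.symm h2))]
    linarith

lemma genPos_mono {P Q : Finset Pt} (h : P ⊆ Q) (hQ : GenPos Q) : GenPos P :=
  fun p hp q hq r hr => hQ p (h hp) q (h hq) r (h hr)

lemma cross_trans (c : ℝ) (p u v w : Pt)
    (hu : u.1 + c * u.2 < p.1 + c * p.2) (hv : v.1 + c * v.2 < p.1 + c * p.2)
    (hw : w.1 + c * w.2 < p.1 + c * p.2)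
    (huv : 0 < cross p u v) (hvw : 0 < cross p v w) : 0 < cross p u w := by
  have key : cross p u w * ((v.1 + c * v.2) - (p.1 + c * p.2)) =
      cross p u v * ((w.1 + c * w.2) - (p.1 + c * p.2)) +
      cross p v w * ((u.1 + c * u.2) - (p.1 + c * p.2)) := by
    unfold cross; ring
  have h1 : cross p u v * ((w.1 + c * w.2) - (p.1 + c * p.2)) < 0 :=
    mul_neg_of_pos_of_neg huv (by linarith)
  have h2 : cross p v w * ((u.1 + c * u.2) - (p.1 + c * p.2)) < 0 :=
    mul_neg_of_pos_of_neg hvw (by linarith)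
  have h3 : cross p u w * ((v.1 + c * v.2) - (p.1 + c * p.2)) < 0 := by linarith
  nlinarith [h3]

lemma collinear_of_cross_eq_zero {p a b : Pt} (hap : a ≠ p) (h : cross p a b = 0) :
    Collinear ℝ ({p, a, b} : Set Pt) := by
  rw [collinear_iff_of_mem (Set.mem_insert p {a, b})]
  refine ⟨a - p, ?_⟩
  intro q hq
  simp only [Set.mem_insert_iff, Set.mem_singleton_iff] at hq
  rcases hq with rfl | rfl | rfl
  · exact ⟨0, by simp⟩
  · refine ⟨1, ?_⟩
    rw [one_smul, vadd_eq_add, sub_add_cancel]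
  · by_cases h1 : a.1 - p.1 = 0
    · have h2 : a.2 - p.2 ≠ 0 := by
        intro h2
        exact hap (Prod.ext (by linarith) (by linarith))
      refine ⟨(q.2 - p.2) / (a.2 - p.2), ?_⟩
      have hz : (a.2 - p.2) * (q.1 - p.1) = 0 := by
        unfold cross at h; linear_combination -h + (q.2 - p.2) * h1
      have hb1 : q.1 - p.1 = 0 := by
        rcases mul_eq_zero.1 hz with h' | h'
        · exact absurd h' h2
        · exact h'
      rw [vadd_eq_add]
      refine Prod.ext ?_ ?_
      · simp only [Prod.fst_add, Prod.smul_fst, Prod.fst_sub, smul_eq_mul]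
        rw [h1]; simp; linarith
      · simp only [Prod.snd_add, Prod.smul_snd, Prod.snd_sub, smul_eq_mul]
        field_simp; ring
    · refine ⟨(q.1 - p.1) / (a.1 - p.1), ?_⟩
      rw [vadd_eq_add]
      refine Prod.ext ?_ ?_
      · simp only [Prod.fst_add, Prod.smul_fst, Prod.fst_sub, smul_eq_mul]
        field_simp; ring
      · simp only [Prod.snd_add, Prod.smul_snd, Prod.snd_sub, smul_eq_mul]
        rw [div_mul_eq_mul_div, eq_comm, div_add' _ _ _ h1, div_eq_iff h1]
        unfold cross at h; linear_combination -h

lemma step (B R : Finset Pt) (hdisj : Disjoint B R) (hgp : GenPos (B ∪ R))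
    (hB : R.card + 3 ≤ B.card) :
    ∃ p a b : Pt, p ∈ B ∧ a ∈ B ∧ b ∈ B ∧ p ≠ a ∧ p ≠ b ∧ a ≠ b ∧
      ∀ z ∈ R, z ∉ convexHull ℝ ({p, a, b} : Set Pt) := by
  classical
  obtain ⟨c, hc⟩ := exists_inj B
  obtain ⟨p, hpB, hpmax⟩ := B.exists_max_image (fun q => q.1 + c * q.2)
    (Finset.card_pos.1 (by omega))
  set RS : Finset Pt := R.filter (fun x => x.1 + c * x.2 < p.1 + c * p.2) with hRSdef
  set rank : Pt → Finset Pt := fun q => RS.filter (fun x => 0 < cross p x q) with hrankdef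
  have hblue : ∀ a ∈ B.erase p, a.1 + c * a.2 < p.1 + c * p.2 := by
    intro a ha
    obtain ⟨hap, haB⟩ := Finset.mem_erase.1 ha
    exact lt_of_le_of_ne (hpmax a haB) (fun h => hap (hc a haB p hpB h))
  have hmemU : ∀ x ∈ B, x ∈ B ∪ R := fun x hx => Finset.mem_union_left _ hx
  have hmemUR : ∀ x ∈ R, x ∈ B ∪ R := fun x hx => Finset.mem_union_right _ hx
  have hne : ∀ x ∈ B, ∀ z ∈ R, x ≠ z := by
    intro x hx z hz h
    exact Finset.disjoint_left.1 hdisj hx (h ▸ hz)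
  -- main geometric claim
  have H : ∀ a b : Pt, a ∈ B.erase p → b ∈ B.erase p → a ≠ b →
      (rank a).card = (rank b).card → 0 < cross p a b →
      ∀ z ∈ R, z ∉ convexHull ℝ ({p, a, b} : Set Pt) := by
    intro a b ha hb hab hr hcab z hzR hzhull
    obtain ⟨hap, haB⟩ := Finset.mem_erase.1 ha
    obtain ⟨hbp, hbB⟩ := Finset.mem_erase.1 hb
    have hzp : z ≠ p := Ne.symm (hne p hpB z hzR)
    have hza : z ≠ a := Ne.symm (hne a haB z hzR)
    have hzb : z ≠ b := Ne.symm (hne b hbB z hzR)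
    -- decompose the hull membership
    rw [show ({p, a, b} : Set Pt) = insert p {a, b} from rfl,
        convexHull_insert ⟨a, Set.mem_insert a {b}⟩, convexHull_pair,
        mem_convexJoin] at hzhull
    obtain ⟨p', hp', x, hx, hzseg⟩ := hzhull
    rw [Set.mem_singleton_iff] at hp'
    rw [hp'] at hzseg
    obtain ⟨μ, ν, hμ, hν, hμν, hxeq⟩ := hx
    obtain ⟨α, s, hα, hs, hαs, hzeq⟩ := hzseg
    have hz1 : α * p.1 + s * x.1 = z.1 := by
      have := congrArg Prod.fst hzeq
      simpa using this
    have hz2 : α * p.2 + s * x.2 = z.2 := by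
      have := congrArg Prod.snd hzeq
      simpa using this
    have hx1 : μ * a.1 + ν * b.1 = x.1 := by
      have := congrArg Prod.fst hxeq
      simpa using this
    have hx2 : μ * a.2 + ν * b.2 = x.2 := by
      have := congrArg Prod.snd hxeq
      simpa using this
    have e1 : z.1 - p.1 = (s * μ) * (a.1 - p.1) + (s * ν) * (b.1 - p.1) := by
      linear_combination (-1 : ℝ) * hz1 - s * hx1 + p.1 * hαs + s * p.1 * hμν
    have e2 : z.2 - p.2 = (s * μ) * (a.2 - p.2) + (s * ν) * (b.2 - p.2) := by
      linear_combination (-1 : ℝ) * hz2 - s * hx2 + p.2 * hαs + s * p.2 * hμν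
    have hβ0 : 0 ≤ s * μ := mul_nonneg hs hμ
    have hγ0 : 0 ≤ s * ν := mul_nonneg hs hν
    by_cases hβ : s * μ = 0 <;> by_cases hγ : s * ν = 0
    · -- z = p
      apply hzp
      refine Prod.ext ?_ ?_
      · rw [hβ, hγ] at e1; linarith
      · rw [hβ, hγ] at e2; linarith
    · -- z on line p b
      refine hgp p (hmemU p hpB) b (hmemU b hbB) z (hmemUR z hzR)
        (Ne.symm hbp) (Ne.symm hzp) (Ne.symm hzb) ?_
      refine collinear_of_cross_eq_zero hbp ?_
      unfold cross
      linear_combination (b.1 - p.1) * e2 - (b.2 - p.2) * e1 +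
        ((b.1 - p.1) * (a.2 - p.2) - (b.2 - p.2) * (a.1 - p.1)) * hβ
    · -- z on line p a
      refine hgp p (hmemU p hpB) a (hmemU a haB) z (hmemUR z hzR)
        (Ne.symm hap) (Ne.symm hzp) (Ne.symm hza) ?_
      refine collinear_of_cross_eq_zero hap ?_
      unfold cross
      linear_combination (a.1 - p.1) * e2 - (a.2 - p.2) * e1 +
        ((a.1 - p.1) * (b.2 - p.2) - (a.2 - p.2) * (b.1 - p.1)) * hγ
    · -- strictly inside the wedge: contradiction with equal ranks
      have hβpos : 0 < s * μ := lt_of_le_of_ne hβ0 (Ne.symm hβ)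
      have hγpos : 0 < s * ν := lt_of_le_of_ne hγ0 (Ne.symm hγ)
      have hfa := hblue a ha
      have hfb := hblue b hb
      have hfz : z.1 + c * z.2 < p.1 + c * p.2 := by
        have hzf : (z.1 + c * z.2) - (p.1 + c * p.2) =
            (s * μ) * ((a.1 + c * a.2) - (p.1 + c * p.2)) +
            (s * ν) * ((b.1 + c * b.2) - (p.1 + c * p.2)) := by
          linear_combination e1 + c * e2
        nlinarith
      have czb : cross p z b = (s * μ) * cross p a b := by
        unfold cross
        linear_combination (b.2 - p.2) * e1 - (b.1 - p.1) * e2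
      have cza : cross p z a = -((s * ν) * cross p a b) := by
        unfold cross
        linear_combination (a.2 - p.2) * e1 - (a.1 - p.1) * e2
      have hsub : rank a ⊆ rank b := by
        intro x hx
        simp only [hrankdef, hRSdef, Finset.mem_filter] at hx ⊢
        exact ⟨hx.1, cross_trans c p x a b hx.1.2 hfa hfb hx.2 hcab⟩
      have hzRb : z ∈ rank b := by
        simp only [hrankdef, hRSdef, Finset.mem_filter]
        exact ⟨⟨hzR, hfz⟩, by rw [czb]; exact mul_pos hβpos hcab⟩
      have hzRa : z ∉ rank a := by
        simp only [hrankdef, hRSdef, Finset.mem_filter]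
        rintro ⟨-, h⟩
        rw [cza] at h
        nlinarith [mul_pos hγpos hcab]
      have : (rank a).card < (rank b).card :=
        Finset.card_lt_card ⟨hsub, fun hba => hzRa (hba hzRb)⟩
      omega
  -- pigeonhole to find two blues with equal rank
  have hRSR : RS.card ≤ R.card := Finset.card_le_card (Finset.filter_subset _ _)
  have hcards : (Finset.range (RS.card + 1)).card < (B.erase p).card := by
    rw [Finset.card_range, Finset.card_erase_of_mem hpB]; omega
  obtain ⟨a, ha, b, hb, hab, hrab⟩ :=
    Finset.exists_ne_map_eq_of_card_lt_of_maps_to hcards (f := fun q => (rank q).card)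
      (fun q _ => by
        simp only [Finset.mem_coe, Finset.mem_range, Nat.lt_succ_iff]
        exact Finset.card_le_card (Finset.filter_subset (fun x => 0 < cross p x q) RS))
  obtain ⟨hap, haB⟩ := Finset.mem_erase.1 ha
  obtain ⟨hbp, hbB⟩ := Finset.mem_erase.1 hb
  have hcab0 : cross p a b ≠ 0 := by
    intro h0
    exact hgp p (hmemU p hpB) a (hmemU a haB) b (hmemU b hbB)
      (Ne.symm hap) (Ne.symm hbp) hab
      (collinear_of_cross_eq_zero hap h0)
  rcases hcab0.lt_or_gt with hneg | hpos
  · have hba : 0 < cross p b a := by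
      have : cross p b a = -(cross p a b) := by unfold cross; ring
      rw [this]; linarith
    exact ⟨p, b, a, hpB, hbB, haB, Ne.symm hbp, Ne.symm hap, Ne.symm hab,
      H b a hb ha (Ne.symm hab) hrab.symm hba⟩
  · exact ⟨p, a, b, hpB, haB, hbB, Ne.symm hap, Ne.symm hbp, hab,
      H a b ha hb hab hrab hpos⟩

lemma key (R : Finset Pt) : ∀ (t : ℕ) (B : Finset Pt), Disjoint B R → GenPos (B ∪ R) →
    R.card + 3 * t ≤ B.card →
    ∃ T : Finset (Finset Pt), T.card = t ∧
      (∀ s ∈ T, s ⊆ B ∧ s.card = 3) ∧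
      (∀ s ∈ T, ∀ s' ∈ T, s ≠ s' → Disjoint s s') ∧
      (∀ s ∈ T, ∀ r ∈ R, r ∉ convexHull ℝ (↑s : Set Pt)) := by
  intro t
  induction t with
  | zero => exact fun B _ _ _ => ⟨∅, by simp⟩
  | succ t ih =>
    intro B hdisj hgp hcard
    obtain ⟨p, a, b, hpB, haB, hbB, hpa, hpb, hab, hempty⟩ :=
      step B R hdisj hgp (by omega)
    set B' : Finset Pt := ((B.erase p).erase a).erase b with hB'def
    have haep : a ∈ B.erase p := Finset.mem_erase.2 ⟨Ne.symm hpa, haB⟩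
    have hbea : b ∈ (B.erase p).erase a :=
      Finset.mem_erase.2 ⟨Ne.symm hab, Finset.mem_erase.2 ⟨Ne.symm hpb, hbB⟩⟩
    have hB'card : B'.card = B.card - 3 := by
      rw [hB'def, Finset.card_erase_of_mem hbea, Finset.card_erase_of_mem haep,
        Finset.card_erase_of_mem hpB]
      omega
    have hsub : B' ⊆ B :=
      (Finset.erase_subset _ _).trans ((Finset.erase_subset _ _).trans (Finset.erase_subset _ _))
    have hpB' : p ∉ B' := by simp [hB'def]
    have haB' : a ∉ B' := by simp [hB'def]
    have hbB' : b ∉ B' := by simp [hB'def]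
    obtain ⟨T', hT'card, hT'sub, hT'disj, hT'empty⟩ :=
      ih B' (hdisj.mono_left hsub)
        (genPos_mono (Finset.union_subset_union_left hsub) hgp) (by omega)
    have htri : ({p, a, b} : Finset Pt).card = 3 := by
      rw [Finset.card_insert_of_notMem (by simp [hpa, hpb]),
        Finset.card_insert_of_notMem (by simp [hab]), Finset.card_singleton]
    have hnotmem : ({p, a, b} : Finset Pt) ∉ T' := by
      intro h
      exact hpB' ((hT'sub _ h).1 (Finset.mem_insert_self p {a, b}))
    have hdisjnew : ∀ s' ∈ T', Disjoint ({p, a, b} : Finset Pt) s' := by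
      intro s' hs'
      rw [Finset.disjoint_left]
      intro x hx hx'
      have hxB' := (hT'sub s' hs').1 hx'
      simp only [Finset.mem_insert, Finset.mem_singleton] at hx
      rcases hx with rfl | rfl | rfl
      · exact hpB' hxB'
      · exact haB' hxB'
      · exact hbB' hxB'
    refine ⟨insert {p, a, b} T', ?_, ?_, ?_, ?_⟩
    · rw [Finset.card_insert_of_notMem hnotmem, hT'card]
    · intro s hs
      rcases Finset.mem_insert.1 hs with rfl | hs'
      · exact ⟨by intro x hx; simp only [Finset.mem_insert, Finset.mem_singleton] at hx
                  rcases hx with rfl | rfl | rfl <;> assumption, htri⟩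
      · exact ⟨(hT'sub s hs').1.trans hsub, (hT'sub s hs').2⟩
    · intro s hs s' hs' hne
      rcases Finset.mem_insert.1 hs with rfl | h1 <;> rcases Finset.mem_insert.1 hs' with rfl | h2
      · exact absurd rfl hne
      · exact hdisjnew s' h2
      · exact (hdisjnew s h1).symm
      · exact hT'disj s h1 s' h2 hne
    · intro s hs r hr
      rcases Finset.mem_insert.1 hs with rfl | hs'
      · have : (↑({p, a, b} : Finset Pt) : Set Pt) = ({p, a, b} : Set Pt) := by simp
        rw [this]
        exact hempty r hr
      · exact hT'empty s hs' r hr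

/-- Given `b` blue points and `b - 3t` red points in general position, there are `t`
vertex-disjoint triangles with blue vertices containing no red point. -/
theorem stmt0 (B R : Finset Pt) (t : ℕ)
    (hdisj : Disjoint B R) (hgp : GenPos (B ∪ R))
    (hcard : R.card + 3 * t = B.card) :
    ∃ T : Finset (Finset Pt), T.card = t ∧
      (∀ s ∈ T, s ⊆ B ∧ s.card = 3) ∧
      (∀ s ∈ T, ∀ s' ∈ T, s ≠ s' → Disjoint s s') ∧
      (∀ s ∈ T, ∀ r ∈ R, r ∉ convexHull ℝ (↑s : Set Pt)) :=
  key R t B hdisj hgp (le_of_eq hcard)
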